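/- arXiv:1502.03622 — 2 statements merged into one kernel-verified Lean document; each statement's English description precedes it below -/
import Mathlib

section
/- Every continuous functional has an associate: if Y : (ℕ → ℕ) → ℕ is pointwise continuous, then there exists γ : List ℕ → ℕ such that (i) γ is a neighbourhood function (if σ is a prefix of τ and γ(σ) > 0 then γ(σ) = γ(τ)), (ii) for every β : ℕ → ℕ there exists k with γ(β̄k) > 0, and (iii) for all β and k, if γ(β̄k) > 0 then γ(β̄k) = Y(β) + 1. -/
/-- Initial segment β̄k = [β 0, …, β (k−1)]. -/
def initSeg (β : ℕ → ℕ) (k : ℕ) : List ℕ := (List.range k).map β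

/-- Every pointwise continuous functional has an associate which is a
neighbourhood function. -/
theorem continuous_has_associate (Y : (ℕ → ℕ) → ℕ)
    (hY : ∀ f : ℕ → ℕ, ∃ N, ∀ g : ℕ → ℕ, (∀ i < N, f i = g i) → Y f = Y g) :
    ∃ γ : List ℕ → ℕ,
      (∀ σ τ : List ℕ, σ <+: τ → 0 < γ σ → γ σ = γ τ) ∧
      (∀ β : ℕ → ℕ, ∃ k : ℕ, 0 < γ (initSeg β k)) ∧
      (∀ (β : ℕ → ℕ) (k : ℕ), 0 < γ (initSeg β k) → γ (initSeg β k) = Y β + 1) := by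
  classical
  -- extension of a finite sequence by zeros
  set ext : List ℕ → (ℕ → ℕ) := fun σ i => σ.getD i 0 with hext
  -- minimal modulus of continuity
  set H : (ℕ → ℕ) → ℕ := fun f => Nat.find (hY f) with hH
  have Hspec : ∀ f g : ℕ → ℕ, (∀ i < H f, f i = g i) → Y f = Y g := fun f =>
    Nat.find_spec (hY f)
  have Hmin : ∀ (f : ℕ → ℕ) (n : ℕ),
      (∀ g : ℕ → ℕ, (∀ i < n, f i = g i) → Y f = Y g) → H f ≤ n := fun f n h =>
    Nat.find_le h
  -- agreement facts
  have agree_prefix : ∀ σ τ : List ℕ, σ <+: τ → ∀ i < σ.length, ext σ i = ext τ i := by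
    intro σ τ hpre i hi
    have hlen := hi.trans_le hpre.length_le
    simp only [hext, List.getD_eq_getElem?_getD, List.getElem?_eq_getElem hi,
      List.getElem?_eq_getElem hlen, List.IsPrefix.getElem hpre hi]
  have agree_init : ∀ (β : ℕ → ℕ) (k : ℕ), ∀ i < k, ext (initSeg β k) i = β i := by
    intro β k i hi
    simp [hext, initSeg, List.getD_eq_getElem?_getD, List.getElem?_map,
      List.getElem?_range hi]
  refine ⟨fun σ => if H (ext σ) ≤ σ.length then Y (ext σ) + 1 else 0, ?_, ?_, ?_⟩
  · intro σ τ hpre hpos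
    by_cases hσ : H (ext σ) ≤ σ.length
    · have hlen := hpre.length_le
      -- σ.length is a modulus for ext τ
      have hYστ : Y (ext σ) = Y (ext τ) :=
        Hspec _ _ (fun i hi => agree_prefix σ τ hpre i (lt_of_lt_of_le hi hσ))
      have hmod : ∀ g : ℕ → ℕ, (∀ i < σ.length, ext τ i = g i) → Y (ext τ) = Y g := by
        intro g hg
        rw [← hYστ]
        exact Hspec _ _ (fun i hi => by
          rw [agree_prefix σ τ hpre i (lt_of_lt_of_le hi hσ)]
          exact hg i (lt_of_lt_of_le hi hσ))
      have hτ : H (ext τ) ≤ τ.length := le_trans (Hmin _ _ hmod) hlen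
      simp only [if_pos hσ, if_pos hτ, hYστ]
    · simp [if_neg hσ] at hpos
  · intro β
    refine ⟨H β, ?_⟩
    have hk : ∀ g : ℕ → ℕ, (∀ i < H β, ext (initSeg β (H β)) i = g i) →
        Y (ext (initSeg β (H β))) = Y g := by
      intro g hg
      have h1 : Y (ext (initSeg β (H β))) = Y β :=
        (Hspec β _ (fun i hi => (agree_init β (H β) i hi).symm)).symm
      rw [h1]
      exact Hspec β g (fun i hi => by rw [← agree_init β (H β) i hi]; exact hg i hi)
    have : H (ext (initSeg β (H β))) ≤ (initSeg β (H β)).length := by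
      have hlen : (initSeg β (H β)).length = H β := by simp [initSeg]
      rw [hlen]; exact Hmin _ _ hk
    simp [if_pos this]
  · intro β k hpos
    by_cases h : H (ext (initSeg β k)) ≤ (initSeg β k).length
    · have hlen : (initSeg β k).length = k := by simp [initSeg]
      have : Y (ext (initSeg β k)) = Y β := by
        refine Hspec _ _ (fun i hi => agree_init β k i ?_)
        rw [hlen] at h
        exact lt_of_lt_of_le hi h
      simp [if_pos h, this]
    · simp [if_neg h] at hpos
end

section
/- Uniform modulus from a pointwise modulus on Cantor space via a bar argument: suppose Y : (ℕ → ℕ) → ℕ and H : (ℕ → ℕ) → ℕ satisfy that for every binary f and every g, if f i = g i for all i < H f then Y f = Y g. Then there exists N₀ such that all binary f, g agreeing below N₀ satisfy Y f = Y g, and moreover N₀ can be chosen as the maximum of H over the finite set {τ ++ 0^ω : τ binary of length N₀'} for a suitable N₀' obtained from weak König's lemma. -/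
/-- Extension of a finite binary sequence given by a function on `Fin n` by zeros. -/
def finExt {n : ℕ} (τ : Fin n → Fin 2) : ℕ → ℕ :=
  fun i => if h : i < n then (τ ⟨i, h⟩ : ℕ) else 0

/-- Uniform modulus from a pointwise modulus on Cantor space: the uniform
modulus `N₀` can be chosen as the maximum of `H` over `{τ ++ 0^ω : τ binary of
length N₀'}` for a suitable `N₀'`. -/
theorem uniform_modulus_from_pointwise (Y H : (ℕ → ℕ) → ℕ)
    (hH : ∀ f : ℕ → ℕ, (∀ i, f i ≤ 1) → ∀ g : ℕ → ℕ,
      (∀ i < H f, f i = g i) → Y f = Y g) :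
    (∃ N₀ : ℕ, ∀ f g : ℕ → ℕ, (∀ i, f i ≤ 1) → (∀ i, g i ≤ 1) →
      (∀ i < N₀, f i = g i) → Y f = Y g) ∧
    (∃ N₀' : ℕ, ∀ f g : ℕ → ℕ, (∀ i, f i ≤ 1) → (∀ i, g i ≤ 1) →
      (∀ i < Finset.univ.sup (fun τ : Fin N₀' → Fin 2 => H (finExt τ)), f i = g i) →
      Y f = Y g) := by
  classical
  -- compactness argument for the first part
  have key : ∃ N₀ : ℕ, ∀ f g : ℕ → ℕ, (∀ i, f i ≤ 1) → (∀ i, g i ≤ 1) →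
      (∀ i < N₀, f i = g i) → Y f = Y g := by
    let c : (ℕ → Fin 2) → ℕ → ℕ := fun x i => (x i : ℕ)
    let U : (ℕ → Fin 2) → Set (ℕ → Fin 2) := fun x => {y | ∀ i < H (c x), y i = x i}
    have hUopen : ∀ x, IsOpen (U x) := by
      intro x
      have hEq : U x = ⋂ i ∈ Finset.range (H (c x)), (fun y : ℕ → Fin 2 => y i) ⁻¹' {x i} := by
        ext y
        simp [U, Set.mem_iInter]
      rw [hEq]
      exact isOpen_biInter_finset fun i _ =>
        (continuous_apply i).isOpen_preimage _ (isOpen_discrete _)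
    have hcover : (Set.univ : Set (ℕ → Fin 2)) ⊆ ⋃ x, U x := fun y _ =>
      Set.mem_iUnion.2 ⟨y, fun i _ => rfl⟩
    obtain ⟨t, ht⟩ := isCompact_univ.elim_finite_subcover U hUopen hcover
    refine ⟨t.sup (fun x => H (c x)), ?_⟩
    intro f g hf hg hfg
    let xf : ℕ → Fin 2 := fun i => ⟨f i, Nat.lt_succ_of_le (hf i)⟩
    obtain ⟨x, hxt, hx⟩ : ∃ x ∈ t, xf ∈ U x := by
      have := ht (Set.mem_univ xf)
      simpa using this
    have hbin : ∀ i, c x i ≤ 1 := fun i => Fin.is_le (x i)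
    have hxf : ∀ i < H (c x), c x i = f i := by
      intro i hi
      have := hx i hi
      exact (congrArg (fun a : Fin 2 => (a : ℕ)) this).symm
    have hxg : ∀ i < H (c x), c x i = g i := by
      intro i hi
      have hiN : i < t.sup (fun x => H (c x)) :=
        lt_of_lt_of_le hi (Finset.le_sup (f := fun x => H (c x)) hxt)
      rw [hxf i hi]
      exact hfg i hiN
    exact (hH (c x) hbin f hxf).symm.trans (hH (c x) hbin g hxg)
  obtain ⟨N₀, hN₀⟩ := key
  refine ⟨⟨N₀, hN₀⟩, N₀, ?_⟩
  intro f g hf hg hfg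
  set M := Finset.univ.sup (fun τ : Fin N₀ → Fin 2 => H (finExt τ)) with hM
  rcases le_total N₀ M with hle | hle
  · exact hN₀ f g hf hg fun i hi => hfg i (lt_of_lt_of_le hi hle)
  · -- M ≤ N₀ : use the zero-extension of f's first N₀ values
    let τ : Fin N₀ → Fin 2 := fun i => ⟨f i, Nat.lt_succ_of_le (hf i)⟩
    have hτbin : ∀ i, finExt τ i ≤ 1 := by
      intro i
      unfold finExt
      split
      · exact Fin.is_le _
      · exact Nat.zero_le 1
    have hHτ : H (finExt τ) ≤ M := Finset.le_sup (f := fun τ : Fin N₀ → Fin 2 => H (finExt τ)) (Finset.mem_univ τ)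
    have hτf : ∀ i < H (finExt τ), finExt τ i = f i := by
      intro i hi
      have hiN : i < N₀ := lt_of_lt_of_le hi (hHτ.trans hle)
      simp [finExt, hiN, τ]
    have hτg : ∀ i < H (finExt τ), finExt τ i = g i := by
      intro i hi
      rw [hτf i hi]
      exact hfg i (lt_of_lt_of_le hi hHτ)
    exact (hH (finExt τ) hτbin f hτf).symm.trans (hH (finExt τ) hτbin g hτg)
end
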